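/- Koksma's inequality in dimension one: if f : [0,1] → ℝ has bounded variation V(f), then for any points x_1, ..., x_N ∈ [0,1], |(1/N) ∑_{i=1}^N f(x_i) − ∫_0^1 f(x) dx| ≤ V(f) · D*_N({x_1,...,x_N}). -/

import Mathlib

open scoped Classical
open MeasureTheory intervalIntegral

lemma koksma_interval_bound {g : ℝ → ℝ} {a b c M : ℝ} (hab : a ≤ b)
    (hg : MonotoneOn g (Set.Icc a b)) (h1 : |c - a| ≤ M) (h2 : |c - b| ≤ M) :
    |(c - b) * g b - (c - a) * g a + ∫ t in a..b, g t| ≤ M * (g b - g a) := by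
  have hgint : IntervalIntegrable g MeasureTheory.volume a b := by
    apply MonotoneOn.intervalIntegrable; rwa [Set.uIcc_of_le hab]
  have hma : a ∈ Set.Icc a b := ⟨le_refl a, hab⟩
  have hmb : b ∈ Set.Icc a b := ⟨hab, le_refl b⟩
  have hab' : g a ≤ g b := hg hma hmb hab
  have hup : ∫ t in a..b, g t ≤ (b - a) * g b := by
    have h := intervalIntegral.integral_mono_on hab hgint intervalIntegrable_const
      (fun t ht => hg ht hmb ht.2)
    simpa [mul_comm] using h
  have hlo : (b - a) * g a ≤ ∫ t in a..b, g t := by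
    have h := intervalIntegral.integral_mono_on hab intervalIntegrable_const hgint
      (fun t ht => hg hma ht ht.1)
    simpa [mul_comm] using h
  rw [abs_le] at h1 h2 ⊢
  constructor <;> nlinarith [h1.1, h1.2, h2.1, h2.2]

lemma mono_koksma (N : ℕ) (hN : 0 < N) (y : Fin N → ℝ) (hy : ∀ i, y i ∈ Set.Icc (0:ℝ) 1)
    (hmono : Monotone y) (D : ℝ)
    (hA : ∀ k : Fin N, ((k : ℕ) + 1 : ℝ)/N - y k ≤ D)
    (hB : ∀ k : Fin N, y k - (k : ℕ)/N ≤ D)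
    (g : ℝ → ℝ) (hg : MonotoneOn g (Set.Icc (0:ℝ) 1)) :
    |(1 / N : ℝ) * ∑ i, g (y i) - ∫ t in (0:ℝ)..1, g t| ≤ (g 1 - g 0) * D := by
  have hNR : (0:ℝ) < N := by exact_mod_cast hN
  -- the extended point sequence
  set z : ℕ → ℝ := fun i => if h : 1 ≤ i ∧ i ≤ N then y ⟨i-1, by omega⟩ else if i = 0 then 0 else 1 with hz
  have hz0 : z 0 = 0 := by simp [hz]
  have hztop : ∀ i, N + 1 ≤ i → z i = 1 := by
    intro i hi
    simp only [hz]
    rw [dif_neg (by omega), if_neg (by omega)]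
  have hzN : z (N+1) = 1 := hztop _ le_rfl
  have hzy : ∀ i : ℕ, ∀ h : i < N, z (i+1) = y ⟨i, h⟩ := by
    intro i h
    simp only [hz]
    rw [dif_pos ⟨by omega, by omega⟩]
    congr 1
  have hzmem : ∀ i, z i ∈ Set.Icc (0:ℝ) 1 := by
    intro i
    by_cases h : 1 ≤ i ∧ i ≤ N
    · simpa [hz, h] using hy _
    · by_cases h0 : i = 0 <;> simp [hz, h, h0]
  have hzeq : ∀ i : ℕ, 1 ≤ i → i ≤ N → ∀ h : i - 1 < N, z i = y ⟨i-1, h⟩ := by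
    intro i h1 h2 h
    have := hzy (i-1) h
    rwa [show i - 1 + 1 = i by omega] at this
  have hzadj : ∀ i, z i ≤ z (i+1) := by
    intro i
    rcases Nat.eq_zero_or_pos i with rfl | hi
    · rw [hz0]; exact (hzmem 1).1
    rcases lt_or_ge i N with hiN | hiN
    · rw [hzy i hiN, hzeq i hi (by omega) (by omega)]
      exact hmono (by simp [Fin.le_def])
    · rw [hztop (i+1) (by omega)]
      exact (hzmem i).2
  have hD0 : 0 ≤ D := by
    have hA0 : (1:ℝ)/N - y ⟨0, hN⟩ ≤ D := by simpa using hA ⟨0, hN⟩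
    have hB0 : y ⟨0, hN⟩ - 0 ≤ D := by simpa using hB ⟨0, hN⟩
    have h1N : (0:ℝ) < 1/N := by positivity
    linarith
  have hdivle : ∀ a b : ℝ, a ≤ b → a / N ≤ b / N := by
    intro a b hab
    gcongr
  -- bounds
  have hMl : ∀ i : ℕ, i ≤ N → |(i:ℝ)/N - z i| ≤ D := by
    intro i hiN
    rcases Nat.eq_zero_or_pos i with rfl | hi
    · simpa [hz0] using hD0
    · have hlt : i - 1 < N := by omega
      rw [hzeq i hi hiN hlt, abs_le]
      have hcast : (((i-1:ℕ)):ℝ) = (i:ℝ) - 1 := by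
        push_cast [Nat.cast_sub hi]; ring
      constructor
      · have h1 := hB ⟨i-1, hlt⟩
        simp only [hcast] at h1
        have h2 : ((i:ℝ)-1)/N ≤ (i:ℝ)/N := hdivle _ _ (by linarith)
        linarith
      · have h1 := hA ⟨i-1, hlt⟩
        simp only [hcast] at h1
        have h2 : (i:ℝ) - 1 + 1 = (i:ℝ) := by ring
        rw [h2] at h1
        linarith
  have hMr : ∀ i : ℕ, i ≤ N → |(i:ℝ)/N - z (i+1)| ≤ D := by
    intro i hiN
    rcases lt_or_ge i N with h | h
    · rw [hzy i h, abs_le]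
      constructor
      · have h1 := hB ⟨i, h⟩
        simp only [Fin.val_mk] at h1
        linarith
      · have h1 := hA ⟨i, h⟩
        simp only [Fin.val_mk] at h1
        have h2 : (i:ℝ)/N ≤ ((i:ℝ)+1)/N := hdivle _ _ (by linarith)
        linarith
    · have hiN' : i = N := le_antisymm hiN h
      have hd : (N:ℝ)/N = 1 := div_self (ne_of_gt hNR)
      rw [hiN', hztop (N+1) le_rfl, hd]
      simpa using hD0
  -- integrability on each subinterval
  have hsub : ∀ k : ℕ, Set.Icc (z k) (z (k+1)) ⊆ Set.Icc (0:ℝ) 1 :=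
    fun k => Set.Icc_subset_Icc (hzmem k).1 (hzmem (k+1)).2
  have hint : ∀ k : ℕ, k < N + 1 → IntervalIntegrable g MeasureTheory.volume (z k) (z (k+1)) := by
    intro k _
    apply MonotoneOn.intervalIntegrable
    rw [Set.uIcc_of_le (hzadj k)]
    exact hg.mono (hsub k)
  have hsumint : ∑ i ∈ Finset.range (N+1), ∫ t in z i..z (i+1), g t = ∫ t in (0:ℝ)..1, g t := by
    have h := intervalIntegral.sum_integral_adjacent_intervals (a := z) (n := N+1) hint
    rwa [hz0, hzN] at h
  set B : ℕ → ℝ := fun i => ((i:ℝ)/N - z i) * g (z i) with hBdef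
  set S := ∑ i, g (y i) with hS
  have hSr : S = ∑ i ∈ Finset.range N, g (z (i+1)) := by
    have hyz : ∀ i : Fin N, y i = z ((i:ℕ)+1) := by
      intro i
      rw [hzy _ i.isLt]
    calc S = ∑ i : Fin N, g (z ((i:ℕ)+1)) :=
            Finset.sum_congr rfl (fun i _ => by rw [hyz i])
      _ = ∑ i ∈ Finset.range N, g (z (i+1)) := Fin.sum_univ_eq_sum_range (fun i => g (z (i+1))) N
  have hkey : (∫ t in (0:ℝ)..1, g t) - (1/N) * S
      = ∑ i ∈ Finset.range (N+1), (((i:ℝ)/N - z (i+1)) * g (z (i+1))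
          - ((i:ℝ)/N - z i) * g (z i) + ∫ t in z i..z (i+1), g t) := by
    have hterm : ∀ i ∈ Finset.range (N+1),
        ((i:ℝ)/N - z (i+1)) * g (z (i+1)) - ((i:ℝ)/N - z i) * g (z i)
          + ∫ t in z i..z (i+1), g t
        = (B (i+1) - B i) + ((∫ t in z i..z (i+1), g t) - (1/N) * g (z (i+1))) := by
      intro i _
      simp only [hBdef]
      push_cast
      field_simp
      ring
    rw [Finset.sum_congr rfl hterm, Finset.sum_add_distrib, Finset.sum_range_sub B,
      Finset.sum_sub_distrib, hsumint]
    have h2 : ∑ i ∈ Finset.range (N+1), (1/(N:ℝ)) * g (z (i+1))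
        = (1/N) * S + (1/N) * g 1 := by
      rw [Finset.sum_range_succ, hzN, ← Finset.mul_sum, ← hSr]
    rw [h2]
    have hB0 : B 0 = 0 := by simp [hBdef, hz0]
    have hBN : B (N+1) = (1/N) * g 1 := by
      simp only [hBdef, hzN]
      push_cast
      field_simp
      ring
    rw [hB0, hBN]
    ring
  have habs : |(∫ t in (0:ℝ)..1, g t) - (1/N) * S| ≤ (g 1 - g 0) * D := by
    rw [hkey]
    refine le_trans (Finset.abs_sum_le_sum_abs _ _) ?_
    have hb : ∀ i ∈ Finset.range (N+1),
        |((i:ℝ)/N - z (i+1)) * g (z (i+1)) - ((i:ℝ)/N - z i) * g (z i)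
          + ∫ t in z i..z (i+1), g t| ≤ D * (g (z (i+1)) - g (z i)) := by
      intro i hi
      have hiN : i ≤ N := Nat.lt_succ_iff.mp (Finset.mem_range.mp hi)
      exact koksma_interval_bound (hzadj i) (hg.mono (hsub i)) (hMl i hiN) (hMr i hiN)
    refine le_trans (Finset.sum_le_sum hb) ?_
    rw [← Finset.mul_sum, Finset.sum_range_sub (fun i => g (z i)), hz0, hzN]
    ring_nf
    exact le_refl _
  rw [abs_sub_comm]
  exact habs

/-- One-dimensional star discrepancy of the points `x 1, ..., x N`:
the supremum over `u ∈ (0,1]` of `|#{i : x i < u}/N - u|`. -/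
noncomputable def starDisc1 (N : ℕ) (x : Fin N → ℝ) : ℝ :=
  ⨆ u : Set.Ioc (0 : ℝ) 1,
    |((Finset.univ.filter (fun i => x i < (u : ℝ))).card : ℝ) / N - (u : ℝ)|

/-- Koksma's inequality in dimension one: for `f : [0,1] → ℝ` of bounded variation,
`|(1/N) ∑ f(xᵢ) - ∫₀¹ f| ≤ V(f) · D*_N({x₁,...,x_N})`. -/
theorem koksma_inequality (N : ℕ) (hN : 0 < N) (x : Fin N → ℝ)
    (hx : ∀ i, x i ∈ Set.Icc (0 : ℝ) 1) (f : ℝ → ℝ)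
    (hf : BoundedVariationOn f (Set.Icc (0 : ℝ) 1)) :
    |(1 / N : ℝ) * ∑ i, f (x i) - ∫ t in (0 : ℝ)..1, f t| ≤
      (eVariationOn f (Set.Icc (0 : ℝ) 1)).toReal * starDisc1 N x := by
  have hNR : (0:ℝ) < N := by exact_mod_cast hN
  set D := starDisc1 N x with hD
  have hbdd : BddAbove (Set.range fun u : Set.Ioc (0:ℝ) 1 =>
      |((Finset.univ.filter (fun i => x i < (u : ℝ))).card : ℝ) / N - (u : ℝ)|) := by
    refine ⟨2, ?_⟩
    rintro v ⟨u, rfl⟩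
    have hcard : ((Finset.univ.filter (fun i => x i < (u : ℝ))).card : ℝ) ≤ N := by
      have h := Finset.card_filter_le (Finset.univ : Finset (Fin N)) (fun i => x i < (u : ℝ))
      have h2 : (Finset.univ : Finset (Fin N)).card = N := by simp
      exact_mod_cast h2 ▸ h
    have h0 : (0:ℝ) ≤ ((Finset.univ.filter (fun i => x i < (u : ℝ))).card : ℝ) :=
      Nat.cast_nonneg _
    have hdiv : ((Finset.univ.filter (fun i => x i < (u : ℝ))).card : ℝ) / N ≤ 1 :=
      (div_le_one hNR).mpr hcard
    have hu1 := u.2.1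
    have hu2 := u.2.2
    rw [abs_le]
    constructor
    · have : (0:ℝ) ≤ _ / (N:ℝ) := div_nonneg h0 hNR.le
      linarith
    · linarith [div_nonneg h0 hNR.le]
  have hDle : ∀ u : ℝ, u ∈ Set.Ioc (0:ℝ) 1 →
      |((Finset.univ.filter (fun i => x i < u)).card : ℝ) / N - u| ≤ D := by
    intro u hu
    exact le_ciSup hbdd ⟨u, hu⟩
  have hD0 : 0 ≤ D :=
    le_trans (abs_nonneg _) (hDle 1 ⟨one_pos, le_rfl⟩)
  -- sorted points
  set σ := Tuple.sort x with hσ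
  set y : Fin N → ℝ := x ∘ σ with hydef
  have hmono : Monotone y := Tuple.monotone_sort x
  have hymem : ∀ i, y i ∈ Set.Icc (0:ℝ) 1 := fun i => hx _
  have hcardeq : ∀ u : ℝ, (Finset.univ.filter (fun i => y i < u)).card
      = (Finset.univ.filter (fun i => x i < u)).card := by
    intro u
    apply Finset.card_bij (fun i _ => σ i)
    · intro a ha
      simp only [Finset.mem_filter, Finset.mem_univ, true_and] at ha ⊢
      exact ha
    · intro a _ b _ h
      exact σ.injective h
    · intro b hb
      refine ⟨σ.symm b, ?_, by simp⟩
      simp only [Finset.mem_filter, Finset.mem_univ, true_and, hydef, Function.comp_apply,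
        Equiv.apply_symm_apply] at hb ⊢
      exact hb
  have hDley : ∀ u : ℝ, u ∈ Set.Ioc (0:ℝ) 1 →
      |((Finset.univ.filter (fun i => y i < u)).card : ℝ) / N - u| ≤ D := by
    intro u hu
    rw [hcardeq]
    exact hDle u hu
  -- discrepancy facts for sorted points
  have hA : ∀ k : Fin N, ((k : ℕ) + 1 : ℝ)/N - y k ≤ D := by
    intro k
    apply le_of_forall_sub_le
    intro ε hε
    by_cases hcase : ((k:ℕ) + 1 : ℝ)/N - y k ≤ ε
    · linarith
    push_neg at hcase
    set u := y k + ε with hu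
    have hk1N : ((k:ℕ) + 1 : ℝ)/N ≤ 1 := by
      rw [div_le_one hNR]
      exact_mod_cast k.isLt
    have hu1 : u ≤ 1 := by linarith
    have hu0 : 0 < u := by have := (hymem k).1; simp only [hu]; linarith
    have hcard : ((k:ℕ) + 1 : ℝ) ≤ ((Finset.univ.filter (fun i => y i < u)).card : ℝ) := by
      have hsubs : Finset.Iic k ⊆ Finset.univ.filter (fun i => y i < u) := by
        intro i hi
        simp only [Finset.mem_filter, Finset.mem_univ, true_and]
        have h1 : y i ≤ y k := hmono (Finset.mem_Iic.mp hi)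
        simp only [hu]; linarith
      have hc : (Finset.Iic k).card = (k:ℕ) + 1 := Fin.card_Iic k
      have := Finset.card_le_card hsubs
      rw [hc] at this
      exact_mod_cast this
    have hd := hDley u ⟨hu0, hu1⟩
    have h1 : ((k:ℕ) + 1 : ℝ)/N ≤ ((Finset.univ.filter (fun i => y i < u)).card : ℝ)/N := by
      gcongr
    have h2 := neg_abs_le (((Finset.univ.filter (fun i => y i < u)).card : ℝ)/N - u)
    have h3 := le_abs_self (((Finset.univ.filter (fun i => y i < u)).card : ℝ)/N - u)
    simp only [hu] at h1 h3 hd ⊢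
    linarith
  have hB : ∀ k : Fin N, y k - ((k : ℕ) : ℝ)/N ≤ D := by
    intro k
    apply le_of_forall_sub_le
    intro ε hε
    by_cases hcase : y k - ((k:ℕ):ℝ)/N ≤ ε
    · linarith
    push_neg at hcase
    set u := y k - ε with hu
    have hk0 : (0:ℝ) ≤ ((k:ℕ):ℝ)/N := by positivity
    have hu0 : 0 < u := by simp only [hu]; linarith
    have hu1 : u ≤ 1 := by have := (hymem k).2; simp only [hu]; linarith
    have hcard : ((Finset.univ.filter (fun i => y i < u)).card : ℝ) ≤ ((k:ℕ):ℝ) := by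
      have hsubs : Finset.univ.filter (fun i => y i < u) ⊆ Finset.Iio k := by
        intro i hi
        simp only [Finset.mem_filter, Finset.mem_univ, true_and] at hi
        rw [Finset.mem_Iio]
        by_contra h
        push_neg at h
        have h2 : y k ≤ y i := hmono h
        simp only [hu] at hi
        linarith
      have hc : (Finset.Iio k).card = (k:ℕ) := Fin.card_Iio k
      have := Finset.card_le_card hsubs
      rw [hc] at this
      exact_mod_cast this
    have hd := hDley u ⟨hu0, hu1⟩
    have h1 : ((Finset.univ.filter (fun i => y i < u)).card : ℝ)/N ≤ ((k:ℕ):ℝ)/N := by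
      gcongr
    have h2 := neg_abs_le (((Finset.univ.filter (fun i => y i < u)).card : ℝ)/N - u)
    simp only [hu] at h1 h2 hd ⊢
    linarith
  -- decomposition f = P - Q with P, Q monotone
  have hlf : LocallyBoundedVariationOn f (Set.Icc (0:ℝ) 1) := hf.locallyBoundedVariationOn
  have h0m : (0:ℝ) ∈ Set.Icc (0:ℝ) 1 := by norm_num
  set p : ℝ → ℝ := fun t => variationOnFromTo f (Set.Icc (0:ℝ) 1) 0 t with hpdef
  have hqm' : MonotoneOn (variationOnFromTo f (Set.Icc (0:ℝ) 1) 0 - f) (Set.Icc (0:ℝ) 1) :=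
    variationOnFromTo.sub_self_monotoneOn hlf h0m
  have hdist : ∀ b c : ℝ, b ∈ Set.Icc (0:ℝ) 1 → c ∈ Set.Icc (0:ℝ) 1 → b ≤ c →
      f b - f c ≤ p c - p b := by
    intro b c bs cs bc
    have h2 : variationOnFromTo f (Set.Icc (0:ℝ) 1) b c = p c - p b := by
      have h3 := variationOnFromTo.add hlf h0m bs cs
      simp only [hpdef]
      linarith
    have h1 : f b - f c ≤ variationOnFromTo f (Set.Icc (0:ℝ) 1) b c := by
      calc f b - f c ≤ |f b - f c| := le_abs_self _
        _ = dist (f c) (f b) := by rw [Real.dist_eq, abs_sub_comm]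
        _ ≤ variationOnFromTo f (Set.Icc (0:ℝ) 1) b c := by
            rw [variationOnFromTo.eq_of_le f _ bc, dist_edist]
            apply ENNReal.toReal_mono (hlf b c bs cs)
            exact eVariationOn.edist_le f ⟨cs, bc, le_rfl⟩ ⟨bs, le_rfl, bc⟩
    linarith
  set P : ℝ → ℝ := fun t => (p t + f t)/2 with hPdef
  set Q : ℝ → ℝ := fun t => (p t - f t)/2 with hQdef
  have hPm : MonotoneOn P (Set.Icc (0:ℝ) 1) := by
    intro b bs c cs bc
    have h1 := hdist b c bs cs bc
    simp only [hPdef]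
    linarith
  have hQm : MonotoneOn Q (Set.Icc (0:ℝ) 1) := by
    intro b bs c cs bc
    have h1 := hqm' bs cs bc
    simp only [Pi.sub_apply] at h1
    simp only [hQdef, hpdef] at *
    linarith
  have hPint : IntervalIntegrable P volume 0 1 :=
    MonotoneOn.intervalIntegrable (by rwa [Set.uIcc_of_le zero_le_one])
  have hQint : IntervalIntegrable Q volume 0 1 :=
    MonotoneOn.intervalIntegrable (by rwa [Set.uIcc_of_le zero_le_one])
  have hfPQ : ∀ t, f t = P t - Q t := by
    intro t
    simp only [hPdef, hQdef]
    ring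
  have hsum : ∑ i, f (y i) = ∑ i, P (y i) - ∑ i, Q (y i) := by
    rw [← Finset.sum_sub_distrib]
    exact Finset.sum_congr rfl fun i _ => hfPQ _
  have hintf : (∫ t in (0:ℝ)..1, f t) = (∫ t in (0:ℝ)..1, P t) - ∫ t in (0:ℝ)..1, Q t := by
    rw [← intervalIntegral.integral_sub hPint hQint]
    exact intervalIntegral.integral_congr (fun t _ => hfPQ t)
  have hsx : ∑ i, f (x i) = ∑ i, f (y i) := (Equiv.sum_comp σ (fun i => f (x i))).symm
  have hKP := mono_koksma N hN y hymem hmono D hA hB P hPm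
  have hKQ := mono_koksma N hN y hymem hmono D hA hB Q hQm
  have hp0 : p 0 = 0 := variationOnFromTo.self f _ 0
  have hp1 : p 1 = (eVariationOn f (Set.Icc (0:ℝ) 1)).toReal := by
    simp only [hpdef]
    rw [variationOnFromTo.eq_of_le f _ zero_le_one, Set.inter_self]
  have heq : (1 / N : ℝ) * ∑ i, f (x i) - ∫ t in (0:ℝ)..1, f t
      = ((1 / N : ℝ) * ∑ i, P (y i) - ∫ t in (0:ℝ)..1, P t)
        - ((1 / N : ℝ) * ∑ i, Q (y i) - ∫ t in (0:ℝ)..1, Q t) := by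
    rw [hsx, hsum, hintf]
    ring
  rw [heq]
  calc |((1 / N : ℝ) * ∑ i, P (y i) - ∫ t in (0:ℝ)..1, P t)
        - ((1 / N : ℝ) * ∑ i, Q (y i) - ∫ t in (0:ℝ)..1, Q t)|
      ≤ |(1 / N : ℝ) * ∑ i, P (y i) - ∫ t in (0:ℝ)..1, P t|
        + |(1 / N : ℝ) * ∑ i, Q (y i) - ∫ t in (0:ℝ)..1, Q t| := abs_sub _ _
    _ ≤ (P 1 - P 0) * D + (Q 1 - Q 0) * D := add_le_add hKP hKQ
    _ = (p 1 - p 0) * D := by simp only [hPdef, hQdef]; ring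
    _ = (eVariationOn f (Set.Icc (0:ℝ) 1)).toReal * D := by rw [hp0, hp1]; ring
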